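/- Let N be the principal truncation of a set F (with 2 ≤ r_M(F) ≤ r(M) − 2) in a matroid M. If H is a flat of N that is skew to F in N, then H is a flat of M of the same rank (r_M(H) = r_N(H)) and H is skew to F in M. -/

import Mathlib

open Set
open scoped Classical

namespace MatroidPaper

variable {α : Type*}

/-- The rank of a set in a matroid: the supremum of cardinalities of independent subsets. -/
noncomputable def rkS (M : Matroid α) (X : Set α) : ℕ :=
  sSup {n | ∃ I, M.Indep I ∧ I ⊆ X ∧ I.ncard = n}

/-- The rank of a matroid. -/
noncomputable def rk (M : Matroid α) : ℕ := rkS M M.E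

/-- A hyperplane: a flat of rank `rk M - 1`. -/
def Hyp (M : Matroid α) (H : Set α) : Prop := M.IsFlat H ∧ rkS M H = rk M - 1

/-- Two sets are skew if the rank of their union is the sum of their ranks. -/
def SkewSets (M : Matroid α) (X Y : Set α) : Prop :=
  rkS M (X ∪ Y) = rkS M X + rkS M Y

/-- A simple matroid: every subset of the ground set with at most two elements is independent. -/
def SimpleM (M : Matroid α) : Prop := ∀ X ⊆ M.E, X.ncard ≤ 2 → M.Indep X

/-- A real-representable matroid. -/
def RealRep (M : Matroid α) : Prop :=
  ∃ (n : ℕ) (φ : α → (Fin n → ℝ)), ∀ I, I ⊆ M.E →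
    (M.Indep I ↔ LinearIndependent ℝ (fun x : I => φ x))

/-- A matroid is `k`-degenerate if it has rank at most one or its ground set is covered by
flats of rank at least two with `∑ (r(Fᵢ) - 1) ≤ k - 1`. -/
def Degen (M : Matroid α) (k : ℕ) : Prop :=
  rk M ≤ 1 ∨ ∃ (t : ℕ) (F : Fin t → Set α),
    (∀ i, M.IsFlat (F i) ∧ 2 ≤ rkS M (F i)) ∧
    M.E ⊆ ⋃ i, F i ∧ ∑ i, (rkS M (F i) - 1) ≤ k - 1

/-- A set `X` is `k`-degenerate in `M` if the restriction `M|X` is a `k`-degenerate matroid. -/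
def DegenSet (M : Matroid α) (X : Set α) (k : ℕ) : Prop := Degen (M.restrict X) k

/-- `N` is the (one-fold) principal truncation of `F` in `M`. -/
noncomputable def IsPT (M : Matroid α) (F : Set α) (N : Matroid α) : Prop :=
  N.E = M.E ∧ ∀ X ⊆ M.E,
    rkS N X = if F ⊆ M.closure X then rkS M X - 1 else rkS M X

/-- `N` is the complete principal truncation `M ÷ F` of `F` in `M`. -/
def IsCPT (M : Matroid α) (F : Set α) (N : Matroid α) : Prop :=
  N.E = M.E ∧ ∀ X ⊆ M.E,
    rkS N X = min (rkS M X + (rkS M F - 1)) (rkS M (X ∪ F)) - (rkS M F - 1)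

lemma ncard_eq_of_basis' {M : Matroid α} [M.Finite] {I J X : Set α}
    (hI : M.IsBasis' I X) (hJ : M.IsBasis' J X) : I.ncard = J.ncard := by
  rw [Set.ncard_def, hI.encard_eq_encard hJ, ← Set.ncard_def]

lemma rkS_basis' {M : Matroid α} [M.Finite] {I X : Set α}
    (hI : M.IsBasis' I X) : rkS M X = I.ncard := by
  apply IsGreatest.csSup_eq
  constructor
  · exact ⟨I, hI.indep, hI.subset, rfl⟩
  · rintro n ⟨J, hJ, hJX, rfl⟩
    obtain ⟨K, hK, hJK⟩ := hJ.subset_isBasis'_of_subset hJX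
    calc J.ncard ≤ K.ncard :=
          Set.ncard_le_ncard hJK (M.set_finite K hK.indep.subset_ground)
      _ = I.ncard := ncard_eq_of_basis' hK hI

lemma ncard_le_rkS {M : Matroid α} [M.Finite] {J X : Set α}
    (hJ : M.Indep J) (hJX : J ⊆ X) : J.ncard ≤ rkS M X := by
  obtain ⟨K, hK, hJK⟩ := hJ.subset_isBasis'_of_subset hJX
  rw [rkS_basis' hK]
  exact Set.ncard_le_ncard hJK (M.set_finite K hK.indep.subset_ground)

lemma rkS_mono {M : Matroid α} [M.Finite] {X Y : Set α} (h : X ⊆ Y) :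
    rkS M X ≤ rkS M Y := by
  obtain ⟨I, hI⟩ := M.exists_isBasis' X
  rw [rkS_basis' hI]
  exact ncard_le_rkS hI.indep (hI.subset.trans h)

lemma rkS_closure {M : Matroid α} [M.Finite] (X : Set α) :
    rkS M (M.closure X) = rkS M X := by
  obtain ⟨I, hI⟩ := M.exists_isBasis' X
  rw [rkS_basis' hI, rkS_basis' hI.isBasis_closure_right.isBasis']

lemma mem_closure_iff_rkS {M : Matroid α} [M.Finite] {X : Set α} {e : α}
    (hX : X ⊆ M.E) (he : e ∈ M.E) :
    e ∈ M.closure X ↔ rkS M (insert e X) = rkS M X := by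
  constructor
  · intro h
    rw [← rkS_closure (insert e X), Matroid.closure_insert_eq_of_mem_closure h, rkS_closure]
  · intro h
    by_contra hecl
    obtain ⟨I, hI⟩ := M.exists_isBasis' X
    have heI : e ∉ M.closure I := by rwa [hI.closure_eq_closure]
    have hind : M.Indep (insert e I) := by
      rw [hI.indep.insert_indep_iff]
      exact Or.inl ⟨he, heI⟩
    have heI' : e ∉ I := fun h' => heI (M.subset_closure I hI.indep.subset_ground h')
    have hle : (insert e I).ncard ≤ rkS M (insert e X) :=
      ncard_le_rkS hind (insert_subset_insert hI.subset)
    rw [Set.ncard_insert_of_notMem heI' (M.set_finite I hI.indep.subset_ground), h,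
      rkS_basis' hI] at hle
    omega

lemma closure_flat' (M : Matroid α) (X : Set α) : M.IsFlat (M.closure X) := by
  rw [Matroid.closure_def]
  haveI : Nonempty ↑{F | M.IsFlat F ∧ X ∩ M.E ⊆ F} :=
    ⟨⟨M.E, M.ground_isFlat, inter_subset_right⟩⟩
  rw [sInter_eq_iInter]
  exact Matroid.IsFlat.iInter fun F => F.2.1

/-- A flat of the principal truncation that is skew to `F` is a flat of `M` of the same rank,
skew to `F` in `M`. -/
theorem stmt6 (M N : Matroid α) [M.Finite] (F : Set α) (hF : F ⊆ M.E)
    (h2 : 2 ≤ rkS M F) (hFr : rkS M F ≤ rk M - 2) (hN : IsPT M F N)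
    (H : Set α) (hH : N.IsFlat H) (hskew : SkewSets N H F) :
    M.IsFlat H ∧ rkS M H = rkS N H ∧ SkewSets M H F := by
  haveI hNfin : N.Finite := ⟨hN.1 ▸ M.ground_finite⟩
  have hHE : H ⊆ M.E := hN.1 ▸ hH.subset_ground
  have hrNF : rkS N F = rkS M F - 1 := by
    rw [hN.2 F hF, if_pos (M.subset_closure F hF)]
  have hUF : F ⊆ M.closure (H ∪ F) :=
    subset_union_right.trans (M.subset_closure (H ∪ F) (union_subset hHE hF))
  have hNU : rkS N (H ∪ F) = rkS M (H ∪ F) - 1 := by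
    rw [hN.2 (H ∪ F) (union_subset hHE hF), if_pos hUF]
  rw [SkewSets] at hskew
  by_cases hc : F ⊆ M.closure H
  · exfalso
    have hH1 : rkS N H = rkS M H - 1 := by rw [hN.2 H hHE, if_pos hc]
    have hU : rkS M (H ∪ F) = rkS M H := by
      refine le_antisymm ?_ (rkS_mono subset_union_left)
      rw [← rkS_closure (M := M) H]
      exact rkS_mono (union_subset (M.subset_closure H hHE) hc)
    rw [hNU, hH1, hrNF, hU] at hskew
    omega
  · have hH1 : rkS N H = rkS M H := by rw [hN.2 H hHE, if_neg hc]
    have hge : rkS M F ≤ rkS M (H ∪ F) := rkS_mono subset_union_right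
    rw [hNU, hH1, hrNF] at hskew
    have hskewM : SkewSets M H F := by rw [SkewSets]; omega
    have hcl : M.closure H = H := by
      refine subset_antisymm ?_ (M.subset_closure H hHE)
      intro e he
      by_contra heH
      have heE : e ∈ M.E := Matroid.mem_ground_of_mem_closure he
      have h1 : rkS M (insert e H) = rkS M H := (mem_closure_iff_rkS hHE heE).mp he
      have h2 : M.closure (insert e H) = M.closure H :=
        Matroid.closure_insert_eq_of_mem_closure he
      have h3 : rkS N (insert e H) = rkS M (insert e H) := by
        rw [hN.2 _ (insert_subset heE hHE), if_neg (by rw [h2]; exact hc)]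
      have h4 : e ∈ N.closure H := by
        rw [mem_closure_iff_rkS (hN.1 ▸ hHE : H ⊆ N.E) (hN.1 ▸ heE : e ∈ N.E)]
        rw [h3, h1, hH1]
      exact heH (hH.closure ▸ h4)
    exact ⟨hcl ▸ closure_flat' M H, hH1.symm, hskewM⟩

end MatroidPaper
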